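/- Let M and N be matchings of a graph H, and let wt_M be the weight function assigning to each edge (u,v) the sum of u's vote comparing v to its M-assignment and v's vote comparing u to its M-assignment (votes in {−1,0,1}, where being unmatched is worse than any neighbor), extended by self-loops of weight 0 for M-unmatched vertices and −1 for M-matched vertices. Let Ñ be the perfect matching in the augmented graph obtained from N by adding self-loops at N-unmatched vertices. Then Δ(N,M) := φ(N,M) − φ(M,N) equals wt_M(Ñ), the total wt_M-weight of Ñ. -/
import Mathlib


open Finset

section Defs
variable {V : Type*}

/-- A matching given as a partial partner function: if `M u = some v` then
`(u,v)` is an edge and `v`'s partner is `u`. -/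
def IsMatching (adj : V → V → Prop) (M : V → Option V) : Prop :=
  ∀ u v, M u = some v → adj u v ∧ M v = some u

/-- Vertex `u` prefers matching `M` to `M'`: matched in `M` and unmatched in `M'`,
or matched in both and prefers its `M`-partner. -/
def PrefersM (pref : V → V → V → Bool) (M M' : V → Option V) (u : V) : Bool :=
  match M u, M' u with
  | some a, some b => pref u a b
  | some _, none => true
  | _, _ => false

/-- `phiM pref M M'` = number of vertices preferring `M` to `M'`. -/
def phiM [Fintype V] (pref : V → V → V → Bool) (M M' : V → Option V) : ℕ :=
  (Finset.univ.filter fun u => PrefersM pref M M' u = true).card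

/-- `M` is popular: no matching is preferred by strictly more vertices. -/
def Popular [Fintype V] (adj : V → V → Prop) (pref : V → V → V → Bool)
    (M : V → Option V) : Prop :=
  ∀ M', IsMatching adj M' → phiM pref M' M ≤ phiM pref M M'

/-- `a` prefers `b` to its assignment under `M` (being unmatched is worst). -/
def PrefOver (pref : V → V → V → Bool) (M : V → Option V) (a b : V) : Prop :=
  match M a with
  | none => True
  | some c => pref a b c = true

/-- `(a,b)` is a blocking edge with respect to `M`. -/
def Blocking (adj : V → V → Prop) (pref : V → V → V → Bool) (M : V → Option V)
    (a b : V) : Prop :=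
  adj a b ∧ PrefOver pref M a b ∧ PrefOver pref M b a

/-- Number of matched vertices (twice the number of edges of `M`). -/
def msize [Fintype V] (M : V → Option V) : ℕ :=
  (Finset.univ.filter fun u => (M u).isSome = true).card

/-- `vote u v v'` where `u` itself encodes "unmatched"; every vertex regards
itself as strictly worse than any neighbor. -/
def vote [DecidableEq V] (pref : V → V → V → Bool) (u v v' : V) : ℤ :=
  if v = v' then 0
  else if v' = u then 1
  else if v = u then -1
  else if pref u v v' then 1 else -1

/-- `wt_M(a,b) = vote_a(b, M̃(a)) + vote_b(a, M̃(b))`. -/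
def wtEdge [DecidableEq V] (pref : V → V → V → Bool) (M : V → Option V) (a b : V) : ℤ :=
  vote pref a b ((M a).getD a) + vote pref b a ((M b).getD b)

/-- `wt_M(u,u)`: 0 if `u` is unmatched in `M`, else −1. -/
def wtSelf (M : V → Option V) (u : V) : ℤ :=
  if (M u).isSome then -1 else 0

end Defs

/-- `Δ(N,M) = φ(N,M) − φ(M,N)` equals the total `wt_M`-weight of the perfect
matching `Ñ` of the augmented graph, i.e. `∑_u vote_u(Ñ(u), M̃(u))` where
`Ñ(u)`, `M̃(u)` are the partners of `u` (or `u` itself if unmatched). -/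
theorem delta_eq_weight {V : Type*} [Fintype V] [DecidableEq V]
    (adj : V → V → Prop) (hsymm : ∀ u v, adj u v → adj v u) (hadjirr : ∀ u, ¬ adj u u)
    (pref : V → V → V → Bool)
    (hpirr : ∀ u a, pref u a a = false)
    (hasym : ∀ u a b, pref u a b = true → pref u b a = false)
    (htot : ∀ u a b, adj u a → adj u b → a ≠ b → pref u a b = true ∨ pref u b a = true)
    (M N : V → Option V) (hM : IsMatching adj M) (hN : IsMatching adj N) :
    (phiM pref N M : ℤ) - (phiM pref M N : ℤ)
      = ∑ u : V, vote pref u ((N u).getD u) ((M u).getD u) := by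
  have key : ∀ u, vote pref u ((N u).getD u) ((M u).getD u)
      = (if PrefersM pref N M u = true then (1:ℤ) else 0)
        - (if PrefersM pref M N u = true then (1:ℤ) else 0) := by
    intro u
    cases hNu : N u with
    | none =>
      cases hMu : M u with
      | none => simp [vote, PrefersM, hNu, hMu]
      | some b =>
        have hbu : b ≠ u := fun h => hadjirr u (h ▸ (hM u b hMu).1)
        simp [vote, PrefersM, hNu, hMu, hbu, Ne.symm hbu]
    | some a =>
      have hau : a ≠ u := fun h => hadjirr u (h ▸ (hN u a hNu).1)
      cases hMu : M u with
      | none => simp [vote, PrefersM, hNu, hMu, hau]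
      | some b =>
        have hbu : b ≠ u := fun h => hadjirr u (h ▸ (hM u b hMu).1)
        by_cases hab : a = b
        · subst hab
          simp [vote, PrefersM, hNu, hMu, hpirr]
        · have hadja := hsymm u a (hN u a hNu).1
          have hadjb := hsymm u b (hM u b hMu).1
          simp only [vote, PrefersM, hNu, hMu, hab, hbu, hau, if_false]
          by_cases hpab : pref u a b = true
          · simp [hpab, hasym u a b hpab, hab, hbu, hau]
          · rcases htot u a b ((hN u a hNu).1) ((hM u b hMu).1) hab with h | h
            · exact absurd h hpab
            · simp [hpab, h, hab, hbu, hau]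
  have h1 : (phiM pref N M : ℤ)
      = ∑ u : V, (if PrefersM pref N M u = true then (1:ℤ) else 0) := by
    rw [phiM, Finset.card_filter, Nat.cast_sum]
    simp
  have h2 : (phiM pref M N : ℤ)
      = ∑ u : V, (if PrefersM pref M N u = true then (1:ℤ) else 0) := by
    rw [phiM, Finset.card_filter, Nat.cast_sum]
    simp
  rw [h1, h2, ← Finset.sum_sub_distrib]
  exact Finset.sum_congr rfl fun u _ => (key u).symm
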